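/- For every T ∈ M_r(ℂ), λ ∈ (0,1), and μ ∈ σ(T), the geometric multiplicity satisfies dim ker(T − μI) ≤ dim ker(Δ_λ(T) − μI). Consequently, if T is diagonalizable then Δ_λ(T) is diagonalizable. -/

import Mathlib

open Matrix
open scoped ComplexOrder

/-- `|T| = (Tᴴ T)^{1/2}`, the positive semidefinite absolute value of a matrix. -/
noncomputable def matAbs {n : Type*} [Fintype n] [DecidableEq n]
    (T : Matrix n n ℂ) : Matrix n n ℂ :=
  ((Matrix.posSemidef_conjTranspose_mul_self T).1.eigenvectorUnitary : Matrix n n ℂ) *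
    diagonal ((↑) ∘ (Real.sqrt ∘ (Matrix.posSemidef_conjTranspose_mul_self T).1.eigenvalues)) *
    (star ((Matrix.posSemidef_conjTranspose_mul_self T).1.eigenvectorUnitary : Matrix n n ℂ))

/-- Real power `P^l` of a Hermitian matrix, via the functional calculus
(junk value `0` if `P` is not Hermitian). -/
noncomputable def hermPow {n : Type*} [Fintype n] [DecidableEq n]
    (P : Matrix n n ℂ) (l : ℝ) : Matrix n n ℂ :=
  if h : P.IsHermitian then h.cfc (fun x : ℝ => x ^ l) else 0

namespace AluthgeAux

variable {n : Type*} [Fintype n] [DecidableEq n]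

lemma star_mul_self_eigenvectorUnitary {A : Matrix n n ℂ} (hA : A.IsHermitian) :
    (star (hA.eigenvectorUnitary : Matrix n n ℂ)) * (hA.eigenvectorUnitary : Matrix n n ℂ) = 1 :=
  Unitary.coe_star_mul_self hA.eigenvectorUnitary

lemma cfc_mul_cfc {A : Matrix n n ℂ} (hA : A.IsHermitian) (f g : ℝ → ℝ) :
    hA.cfc f * hA.cfc g = hA.cfc (fun x => f x * g x) := by
  unfold Matrix.IsHermitian.cfc
  simp only [Unitary.conjStarAlgAut_apply, Unitary.coe_star]
  have h1 := star_mul_self_eigenvectorUnitary hA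
  set V := (hA.eigenvectorUnitary : Matrix n n ℂ)
  have key : ∀ D1 D2 : Matrix n n ℂ,
      (V * D1 * star V) * (V * D2 * star V) = V * (D1 * (star V * V) * D2) * star V := by
    intro D1 D2; simp only [mul_assoc]
  rw [key, h1, mul_one, diagonal_mul_diagonal]
  congr 1
  congr 1
  rw [diagonal_eq_diagonal_iff]
  intro i
  simp [Function.comp]

lemma cfc_congr_eigs {A : Matrix n n ℂ} (hA : A.IsHermitian) {f g : ℝ → ℝ}
    (h : ∀ i, f (hA.eigenvalues i) = g (hA.eigenvalues i)) : hA.cfc f = hA.cfc g := by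
  unfold Matrix.IsHermitian.cfc
  simp only [Unitary.conjStarAlgAut_apply, Unitary.coe_star]
  congr 1
  congr 1
  rw [diagonal_eq_diagonal_iff]
  intro i
  simp [Function.comp, h i]

lemma cfc_id {A : Matrix n n ℂ} (hA : A.IsHermitian) : hA.cfc (fun x => x) = A :=
  hA.spectral_theorem.symm

lemma cfc_mulVec_zero_iff {A : Matrix n n ℂ} (hA : A.IsHermitian) (f : ℝ → ℝ) (x : n → ℂ) :
    (hA.cfc f).mulVec x = 0 ↔
      ∀ i, ((f (hA.eigenvalues i) : ℂ) *
        ((star (hA.eigenvectorUnitary : Matrix n n ℂ)).mulVec x) i = 0) := by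
  have h1 := star_mul_self_eigenvectorUnitary hA
  set V := (hA.eigenvectorUnitary : Matrix n n ℂ) with hV
  have hVinj : ∀ z : n → ℂ, V.mulVec z = 0 ↔ z = 0 := by
    intro z
    constructor
    · intro hz
      have := congrArg (fun w => (star V).mulVec w) hz
      simpa [mulVec_mulVec, h1, one_mulVec, mulVec_zero] using this
    · intro hz; rw [hz, mulVec_zero]
  unfold Matrix.IsHermitian.cfc
  simp only [Unitary.conjStarAlgAut_apply, Unitary.coe_star]
  rw [← mulVec_mulVec, ← mulVec_mulVec, hVinj]
  rw [funext_iff]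
  refine forall_congr' fun i => ?_
  simp [mulVec_diagonal, Function.comp, hV]

lemma cfc_mulVec_zero_iff_of_eigs {A : Matrix n n ℂ} (hA : A.IsHermitian) {f g : ℝ → ℝ}
    (h : ∀ i, (f (hA.eigenvalues i) = 0 ↔ g (hA.eigenvalues i) = 0)) (x : n → ℂ) :
    (hA.cfc f).mulVec x = 0 ↔ (hA.cfc g).mulVec x = 0 := by
  rw [cfc_mulVec_zero_iff, cfc_mulVec_zero_iff]
  refine forall_congr' fun i => ?_
  rw [mul_eq_zero, mul_eq_zero, Complex.ofReal_eq_zero, Complex.ofReal_eq_zero, h i]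

lemma hermPow_def {P : Matrix n n ℂ} (hP : P.IsHermitian) (a : ℝ) :
    hermPow P a = hP.cfc (fun x => x ^ a) := dif_pos hP

lemma hermPow_mul_hermPow {P : Matrix n n ℂ} (hP : P.PosSemidef) {a b : ℝ}
    (ha : 0 < a) (hab : a + b = 1) : hermPow P a * hermPow P b = P := by
  rw [hermPow_def hP.1, hermPow_def hP.1, cfc_mul_cfc]
  rw [cfc_congr_eigs hP.1 (g := fun x => x) ?_, cfc_id]
  intro i
  rcases eq_or_lt_of_le (hP.eigenvalues_nonneg i) with h | h
  · rw [← h, Real.zero_rpow (ne_of_gt ha), zero_mul]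
  · rw [← Real.rpow_add h, hab, Real.rpow_one]

lemma hermPow_mulVec_zero_iff {P : Matrix n n ℂ} (hP : P.PosSemidef) {a : ℝ}
    (ha : 0 < a) (x : n → ℂ) :
    (hermPow P a).mulVec x = 0 ↔ P.mulVec x = 0 := by
  rw [hermPow_def hP.1]
  conv_rhs => rw [← cfc_id hP.1]
  exact cfc_mulVec_zero_iff_of_eigs hP.1
    (fun i => Real.rpow_eq_zero (hP.eigenvalues_nonneg i) (ne_of_gt ha)) x

end AluthgeAux

open AluthgeAux

/-- The λ-Aluthge transform `|T|^λ U |T|^{1-λ}`, where `U` is a polar part of `T`. -/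
noncomputable def aluthge {n : Type*} [Fintype n] [DecidableEq n]
    (l : ℝ) (U T : Matrix n n ℂ) : Matrix n n ℂ :=
  hermPow (matAbs T) l * U * hermPow (matAbs T) (1 - l)

/-- geometric multiplicities do not decrease under the λ-Aluthge transform;
consequently, if `T` is diagonalizable then so is `Δ_λ(T)`. -/
theorem geomMult_le_aluthge {r : ℕ} (l : ℝ) (hl : l ∈ Set.Ioo (0 : ℝ) 1)
    (T U : Matrix (Fin r) (Fin r) ℂ)
    (hU : U ∈ Matrix.unitaryGroup (Fin r) ℂ) (hpolar : T = U * matAbs T) :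
    (∀ μ ∈ spectrum ℂ T,
      Module.finrank ℂ (LinearMap.ker (Matrix.mulVecLin (T - μ • 1))) ≤
      Module.finrank ℂ (LinearMap.ker (Matrix.mulVecLin (aluthge l U T - μ • 1)))) ∧
    ((∃ S : (Matrix (Fin r) (Fin r) ℂ)ˣ, ∃ d : Fin r → ℂ,
        T = (S : Matrix (Fin r) (Fin r) ℂ) * Matrix.diagonal d *
          ((S⁻¹ : (Matrix (Fin r) (Fin r) ℂ)ˣ) : Matrix (Fin r) (Fin r) ℂ)) →
      ∃ S : (Matrix (Fin r) (Fin r) ℂ)ˣ, ∃ d : Fin r → ℂ,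
        aluthge l U T = (S : Matrix (Fin r) (Fin r) ℂ) * Matrix.diagonal d *
          ((S⁻¹ : (Matrix (Fin r) (Fin r) ℂ)ˣ) : Matrix (Fin r) (Fin r) ℂ)) := by
  obtain ⟨hl0, hl1⟩ := hl
  have hl1' : (0 : ℝ) < 1 - l := by linarith
  have hP : (matAbs T).PosSemidef := by
    unfold matAbs
    exact (Matrix.PosSemidef.diagonal
      (fun i => Complex.zero_le_real.mpr (Real.sqrt_nonneg _))).mul_mul_conjTranspose_same _
  have hUU : star U * U = 1 := (Matrix.mem_unitaryGroup_iff').mp hU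
  have hPU : star U * T = matAbs T := by
    conv_lhs => rw [hpolar]
    rw [← mul_assoc, hUU, one_mul]
  have hBA : hermPow (matAbs T) (1 - l) * hermPow (matAbs T) l = matAbs T :=
    hermPow_mul_hermPow hP hl1' (by ring)
  -- key intertwining identity  Δ ∘ |T|^l = |T|^l ∘ T
  have hkey : aluthge l U T * hermPow (matAbs T) l = hermPow (matAbs T) l * T := by
    unfold aluthge
    rw [mul_assoc (hermPow (matAbs T) l * U), hBA, mul_assoc, ← hpolar]
  -- kernels of T and |T| coincide
  have hTP : ∀ x, T.mulVec x = 0 ↔ (matAbs T).mulVec x = 0 := by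
    intro x
    constructor
    · intro h
      rw [← hPU, ← Matrix.mulVec_mulVec, h, Matrix.mulVec_zero]
    · intro h
      rw [hpolar, ← Matrix.mulVec_mulVec, h, Matrix.mulVec_zero]
  constructor
  · intro μ _
    by_cases hμ0 : μ = 0
    · subst hμ0
      have h01 : ∀ M : Matrix (Fin r) (Fin r) ℂ, M - (0 : ℂ) • 1 = M := fun M => by simp
      rw [h01, h01]
      refine Submodule.finrank_mono ?_
      intro x hx
      rw [LinearMap.mem_ker, Matrix.mulVecLin_apply] at hx ⊢
      have hPx : (matAbs T).mulVec x = 0 := (hTP x).1 hx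
      have hBx : (hermPow (matAbs T) (1 - l)).mulVec x = 0 :=
        (hermPow_mulVec_zero_iff hP hl1' x).2 hPx
      unfold aluthge
      rw [← Matrix.mulVec_mulVec, hBx, Matrix.mulVec_zero]
    · have hmem : ∀ x, x ∈ LinearMap.ker (Matrix.mulVecLin (T - μ • 1)) ↔
          T.mulVec x = μ • x := by
        intro x
        rw [LinearMap.mem_ker, Matrix.mulVecLin_apply, Matrix.sub_mulVec,
          Matrix.smul_mulVec, Matrix.one_mulVec, sub_eq_zero]
      have hmap : ∀ x ∈ LinearMap.ker (Matrix.mulVecLin (T - μ • 1)),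
          Matrix.mulVecLin (hermPow (matAbs T) l) x ∈
            LinearMap.ker (Matrix.mulVecLin (aluthge l U T - μ • 1)) := by
        intro x hx
        rw [hmem] at hx
        rw [LinearMap.mem_ker, Matrix.mulVecLin_apply, Matrix.mulVecLin_apply,
          Matrix.sub_mulVec, Matrix.smul_mulVec, Matrix.one_mulVec, sub_eq_zero,
          Matrix.mulVec_mulVec, hkey, ← Matrix.mulVec_mulVec, hx, Matrix.mulVec_smul]
      refine LinearMap.finrank_le_finrank_of_injective
        (f := (Matrix.mulVecLin (hermPow (matAbs T) l)).restrict hmap) ?_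
      intro x y hxy
      have hxy' : (hermPow (matAbs T) l).mulVec (x.1 - y.1) = 0 := by
        have := congrArg Subtype.val hxy
        simp only [LinearMap.restrict_apply, Matrix.mulVecLin_apply] at this
        rw [Matrix.mulVec_sub, this, sub_self]
      have hTxy : T.mulVec (x.1 - y.1) = 0 :=
        (hTP _).2 ((hermPow_mulVec_zero_iff hP hl0 _).1 hxy')
      have hx := (hmem x.1).1 x.2
      have hy := (hmem y.1).1 y.2
      rw [Matrix.mulVec_sub, hx, hy, ← smul_sub] at hTxy
      have : x.1 - y.1 = 0 := by
        rcases smul_eq_zero.mp hTxy with h | h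
        · exact absurd h hμ0
        · exact h
      exact Subtype.ext (sub_eq_zero.mp this)
  · rintro ⟨S, d, hT⟩
    classical
    have hSS : ((S⁻¹ : (Matrix (Fin r) (Fin r) ℂ)ˣ) : Matrix (Fin r) (Fin r) ℂ) * S = 1 := by
      rw [← Units.val_mul, inv_mul_cancel S, Units.val_one]
    have hTS : T * (S : Matrix (Fin r) (Fin r) ℂ) = (S : Matrix (Fin r) (Fin r) ℂ) * Matrix.diagonal d := by
      rw [hT, mul_assoc, mul_assoc, hSS, mul_one]
    set e0 : Fin r → ℂ := fun i => if d i = 0 then 1 else 0 with he0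
    set e1 : Fin r → ℂ := fun i => if d i = 0 then 0 else 1 with he1
    set A := hermPow (matAbs T) l with hA
    set B := hermPow (matAbs T) (1 - l) with hB
    set SM := (S : Matrix (Fin r) (Fin r) ℂ) with hSM
    set W := A * SM * Matrix.diagonal e1 + SM * Matrix.diagonal e0 with hW
    have hde0 : ∀ v : Fin r → ℂ, (fun i => d i * (e0 i * v i)) = 0 := by
      intro v; funext i; by_cases h : d i = 0 <;> simp [he0, h]
    -- T * (SM * diagonal e0) = 0 at the mulVec level
    have hTy : ∀ v : Fin r → ℂ, T.mulVec (SM.mulVec (fun i => e0 i * v i)) = 0 := by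
      intro v
      rw [Matrix.mulVec_mulVec, hTS, ← Matrix.mulVec_mulVec]
      have : (Matrix.diagonal d).mulVec (fun i => e0 i * v i) = 0 := by
        funext i
        rw [Matrix.mulVec_diagonal]
        exact congrFun (hde0 v) i
      rw [this, Matrix.mulVec_zero]
    have hBy : ∀ v : Fin r → ℂ, B.mulVec (SM.mulVec (fun i => e0 i * v i)) = 0 := by
      intro v
      exact (hermPow_mulVec_zero_iff hP hl1' _).2 ((hTP _).1 (hTy v))
    have hSinj : Function.Injective SM.mulVec :=
      Matrix.mulVec_injective_iff_isUnit.mpr S.isUnit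
    -- W is injective on vectors
    have hWinj : Function.Injective W.mulVec := by
      have hker : ∀ c, W.mulVec c = 0 → c = 0 := by
        intro c hc
        rw [hW, Matrix.add_mulVec] at hc
        simp only [← Matrix.mulVec_mulVec] at hc
        have hd1 : (Matrix.diagonal e1).mulVec c = fun i => e1 i * c i := by
          funext i; rw [Matrix.mulVec_diagonal]
        have hd0 : (Matrix.diagonal e0).mulVec c = fun i => e0 i * c i := by
          funext i; rw [Matrix.mulVec_diagonal]
        rw [hd1, hd0] at hc
        -- apply B to hc
        have hBc := congrArg B.mulVec hc
        rw [Matrix.mulVec_add, Matrix.mulVec_zero, hBy c, add_zero,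
          Matrix.mulVec_mulVec, hBA] at hBc
        have hTx : T.mulVec (SM.mulVec (fun i => e1 i * c i)) = 0 := (hTP _).2 hBc
        rw [Matrix.mulVec_mulVec, hTS, ← Matrix.mulVec_mulVec] at hTx
        have hdiag : (Matrix.diagonal d).mulVec (fun i => e1 i * c i) = 0 := by
          apply hSinj
          rw [Matrix.mulVec_zero]
          exact hTx
        have hc1 : ∀ i, d i ≠ 0 → c i = 0 := by
          intro i hi
          have := congrFun hdiag i
          rw [Matrix.mulVec_diagonal] at this
          simp only [he1, if_neg hi, one_mul, Pi.zero_apply] at this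
          exact (mul_eq_zero.mp this).resolve_left hi
        have he1c : (fun i => e1 i * c i) = 0 := by
          funext i
          by_cases h : d i = 0
          · simp [he1, h]
          · simp [hc1 i h]
        rw [he1c, Matrix.mulVec_zero, Matrix.mulVec_zero, zero_add] at hc
        have he0c : (fun i => e0 i * c i) = (0 : Fin r → ℂ) := by
          apply hSinj
          rw [hc, Matrix.mulVec_zero]
        funext i
        by_cases h : d i = 0
        · have := congrFun he0c i
          simpa [he0, h] using this
        · exact hc1 i h
      intro c1 c2 h
      have : W.mulVec (c1 - c2) = 0 := by rw [Matrix.mulVec_sub, h, sub_self]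
      exact sub_eq_zero.mp (hker _ this)
    have hWu : IsUnit W := Matrix.mulVec_injective_iff_isUnit.mp hWinj
    obtain ⟨W', hW'⟩ := hWu
    refine ⟨W', d, ?_⟩
    -- Δ * W = W * diagonal d
    have hDW : aluthge l U T * W = W * Matrix.diagonal d := by
      have hΔ0 : aluthge l U T * (SM * Matrix.diagonal e0) = 0 := by
        ext i j
        have hps : (SM * Matrix.diagonal e0).mulVec (Pi.single j 1 : Fin r → ℂ) =
            SM.mulVec (fun k => e0 k * (Pi.single j 1 : Fin r → ℂ) k) := by
          rw [← Matrix.mulVec_mulVec]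
          refine congrArg SM.mulVec ?_
          funext k; rw [Matrix.mulVec_diagonal]
        have h2 : (aluthge l U T * (SM * Matrix.diagonal e0)).mulVec
            (Pi.single j 1 : Fin r → ℂ) = 0 := by
          rw [← Matrix.mulVec_mulVec, hps]
          show (A * U * B).mulVec _ = 0
          rw [← Matrix.mulVec_mulVec, hBy, Matrix.mulVec_zero]
        have h3 := congrFun h2 i
        simpa using h3
      have hΔ1 : aluthge l U T * (A * SM * Matrix.diagonal e1) =
          A * SM * Matrix.diagonal (fun i => d i * e1 i) := by
        rw [show aluthge l U T * (A * SM * Matrix.diagonal e1) =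
            (aluthge l U T * A) * SM * Matrix.diagonal e1 by simp only [mul_assoc], hkey]
        rw [show A * T * SM * Matrix.diagonal e1 =
            A * (T * SM) * Matrix.diagonal e1 by simp only [mul_assoc], hTS]
        rw [show A * (SM * Matrix.diagonal d) * Matrix.diagonal e1 =
            A * SM * (Matrix.diagonal d * Matrix.diagonal e1) by simp only [mul_assoc],
          Matrix.diagonal_mul_diagonal]
      have hd1 : Matrix.diagonal e1 * Matrix.diagonal d =
          Matrix.diagonal (fun i => d i * e1 i) := by
        rw [Matrix.diagonal_mul_diagonal]
        exact congrArg Matrix.diagonal (funext fun i => mul_comm _ _)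
      have hd0 : Matrix.diagonal e0 * Matrix.diagonal d = (0 : Matrix (Fin r) (Fin r) ℂ) := by
        rw [Matrix.diagonal_mul_diagonal, ← Matrix.diagonal_zero]
        refine congrArg Matrix.diagonal ?_
        funext i
        by_cases h : d i = 0 <;> simp [he0, h]
      rw [hW, mul_add, hΔ0, add_zero, hΔ1, add_mul, mul_assoc (A * SM), hd1,
        mul_assoc SM, hd0, mul_zero, add_zero]
    calc aluthge l U T = aluthge l U T * ((W' : Matrix (Fin r) (Fin r) ℂ) *
          ((W'⁻¹ : (Matrix (Fin r) (Fin r) ℂ)ˣ) : Matrix (Fin r) (Fin r) ℂ)) := by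
          rw [← Units.val_mul, mul_inv_cancel W', Units.val_one, mul_one]
      _ = (aluthge l U T * W) * ((W'⁻¹ : (Matrix (Fin r) (Fin r) ℂ)ˣ) : Matrix (Fin r) (Fin r) ℂ) := by
          rw [hW', mul_assoc]
      _ = (W' : Matrix (Fin r) (Fin r) ℂ) * Matrix.diagonal d *
          ((W'⁻¹ : (Matrix (Fin r) (Fin r) ℂ)ˣ) : Matrix (Fin r) (Fin r) ℂ) := by
          rw [hDW, hW']
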